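/- Let {M_i}_{i=1}^m be an observable on a finite-dimensional complex Hilbert space H_A and {N_j}_{j=1}^l an observable on a finite-dimensional complex Hilbert space H_B. If H₁ ⊆ H_A is an indistinguishable subspace for {M_i} and H₂ ⊆ H_B is an indistinguishable subspace for {N_j}, then H₁ ⊗ H₂ is an indistinguishable subspace for the observable {M_i ⊗ N_j}_{i,j} on H_A ⊗ H_B. -/

import Mathlib

open Matrix Kronecker ComplexOrder

set_option linter.unusedSectionVars false

/-- H₀ is an indistinguishable subspace for the family of operators {M_i} (density
matrices supported in H₀ are not distinguished by the outcome probabilities Tr(M_i ρ)). -/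
def MatIndistinguishable {dA : Type*} [Fintype dA] {ι : Type*}
    (M : ι → Matrix dA dA ℂ) (H₀ : Submodule ℂ (dA → ℂ)) : Prop :=
  ∀ i, ∀ ρ₁ ρ₂ : Matrix dA dA ℂ,
    ρ₁.PosSemidef → ρ₁.trace = 1 → LinearMap.range ρ₁.mulVecLin ≤ H₀ →
    ρ₂.PosSemidef → ρ₂.trace = 1 → LinearMap.range ρ₂.mulVecLin ≤ H₀ →
    (M i * ρ₁).trace = (M i * ρ₂).trace

section Aux

variable {n : Type*} [Fintype n] [DecidableEq n]

private lemma polar_aux (A : Matrix n n ℂ) (x y : n → ℂ) :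
    star x ⬝ᵥ A.mulVec y =
      (star (x + y) ⬝ᵥ A.mulVec (x + y) - star (x - y) ⬝ᵥ A.mulVec (x - y)
        - Complex.I * (star (x + Complex.I • y) ⬝ᵥ A.mulVec (x + Complex.I • y))
        + Complex.I * (star (x - Complex.I • y) ⬝ᵥ A.mulVec (x - Complex.I • y))) / 4 := by
  simp only [star_add, star_sub, star_smul, Matrix.mulVec_add, Matrix.mulVec_sub,
    Matrix.mulVec_smul, add_dotProduct, sub_dotProduct, smul_dotProduct,
    dotProduct_add, dotProduct_sub, dotProduct_smul,
    Complex.star_def, Complex.conj_I, smul_eq_mul, neg_mul, neg_neg]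
  ring_nf
  rw [Complex.I_sq]
  ring

private lemma sesq_of_quad (A : Matrix n n ℂ) (c : ℂ) (W : Submodule ℂ (n → ℂ))
    (h : ∀ v ∈ W, star v ⬝ᵥ A.mulVec v = c * (star v ⬝ᵥ v)) :
    ∀ x ∈ W, ∀ y ∈ W, star x ⬝ᵥ A.mulVec y = c * (star x ⬝ᵥ y) := by
  intro x hx y hy
  have hI : Complex.I • y ∈ W := W.smul_mem _ hy
  have h2 := polar_aux (1 : Matrix n n ℂ) x y
  simp only [Matrix.one_mulVec] at h2
  rw [polar_aux A x y, h _ (W.add_mem hx hy), h _ (W.sub_mem hx hy),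
    h _ (W.add_mem hx hI), h _ (W.sub_mem hx hI), h2]
  ring

private lemma vecMulVec_mulVec (x y v : n → ℂ) :
    (vecMulVec x y).mulVec v = (y ⬝ᵥ v) • x := by
  funext i
  simp only [Matrix.mulVec, Matrix.vecMulVec_apply, dotProduct, Pi.smul_apply, smul_eq_mul,
    Finset.sum_mul]
  exact Finset.sum_congr rfl fun j _ => by ring

private lemma trace_vecMulVec (x y : n → ℂ) : (vecMulVec x y).trace = y ⬝ᵥ x := by
  simp only [Matrix.trace, Matrix.diag_apply, Matrix.vecMulVec_apply, dotProduct]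
  exact Finset.sum_congr rfl fun i _ => by ring

private lemma trace_mul_vecMulVec (A : Matrix n n ℂ) (x y : n → ℂ) :
    (A * vecMulVec x y).trace = y ⬝ᵥ A.mulVec x := by
  simp only [Matrix.trace, Matrix.diag_apply, Matrix.mul_apply, Matrix.vecMulVec_apply,
    dotProduct, Matrix.mulVec, Finset.mul_sum]
  exact Finset.sum_congr rfl fun i _ => Finset.sum_congr rfl fun j _ => by ring

private lemma state_facts (x : n → ℂ) (hx : x ≠ 0) :
    ∃ ρ : Matrix n n ℂ, ρ.PosSemidef ∧ ρ.trace = 1 ∧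
      (∀ v, ρ.mulVec v ∈ Submodule.span ℂ ({x} : Set (n → ℂ))) ∧
      (∀ A : Matrix n n ℂ, (A * ρ).trace = (star x ⬝ᵥ x)⁻¹ * (star x ⬝ᵥ A.mulVec x)) := by
  set t : ℂ := star x ⬝ᵥ x with ht
  have ht0 : 0 ≤ t := dotProduct_star_self_nonneg x
  have htne : t ≠ 0 := fun h => hx (dotProduct_star_self_eq_zero.mp h)
  have hst : star t = t := by
    simp only [ht, dotProduct, star_sum, star_mul', star_star, Pi.star_apply]
    exact Finset.sum_congr rfl fun i _ => mul_comm _ _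
  have htinv : (0:ℂ) ≤ t⁻¹ := by
    have htre : t = (t.re : ℂ) := Complex.ext rfl (by simpa using (Complex.le_def.mp ht0).2.symm)
    rw [htre, ← Complex.ofReal_inv]
    exact Complex.zero_le_real.mpr (inv_nonneg.mpr (by
      have := (Complex.le_def.mp ht0).1; simpa using this))
  refine ⟨t⁻¹ • vecMulVec x (star x), Matrix.posSemidef_iff_dotProduct_mulVec.mpr ⟨?_, ?_⟩, ?_, ?_, ?_⟩
  · ext i j
    simp only [Matrix.conjTranspose_apply, Matrix.smul_apply, Matrix.vecMulVec_apply,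
      smul_eq_mul, star_mul', star_star, Pi.star_apply, star_inv₀, hst]
    ring
  · intro v
    rw [Matrix.smul_mulVec, _root_.vecMulVec_mulVec]
    rw [dotProduct_smul, dotProduct_smul, smul_eq_mul, smul_eq_mul]
    have hz : star (star v ⬝ᵥ x) = star x ⬝ᵥ v := by
      simp only [dotProduct, star_sum, star_mul', star_star, Pi.star_apply]
      exact Finset.sum_congr rfl fun i _ => mul_comm _ _
    rw [← hz]
    exact mul_nonneg htinv (star_mul_self_nonneg _)
  · rw [Matrix.trace_smul, _root_.trace_vecMulVec, smul_eq_mul, ← ht, inv_mul_cancel₀ htne]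
  · intro v
    rw [Matrix.smul_mulVec, _root_.vecMulVec_mulVec]
    exact Submodule.smul_mem _ _ (Submodule.smul_mem _ _ (Submodule.mem_span_singleton_self x))
  · intro A
    rw [mul_smul_comm, Matrix.trace_smul, trace_mul_vecMulVec, smul_eq_mul]

private lemma exists_scalar (M : Matrix n n ℂ) (H₀ : Submodule ℂ (n → ℂ)) (hH : H₀ ≠ ⊥)
    (hind : ∀ ρ₁ ρ₂ : Matrix n n ℂ, ρ₁.PosSemidef → ρ₁.trace = 1 →
      LinearMap.range ρ₁.mulVecLin ≤ H₀ → ρ₂.PosSemidef → ρ₂.trace = 1 →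
      LinearMap.range ρ₂.mulVecLin ≤ H₀ → (M * ρ₁).trace = (M * ρ₂).trace) :
    ∃ c : ℂ, ∀ x ∈ H₀, ∀ y ∈ H₀, star x ⬝ᵥ M.mulVec y = c * (star x ⬝ᵥ y) := by
  obtain ⟨u, hu, hu0⟩ := Submodule.exists_mem_ne_zero_of_ne_bot hH
  obtain ⟨ρu, hupsd, hutr, hurg, hutr'⟩ := state_facts u hu0
  set c : ℂ := (star u ⬝ᵥ u)⁻¹ * (star u ⬝ᵥ M.mulVec u) with hc
  have hrange_u : LinearMap.range ρu.mulVecLin ≤ H₀ := by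
    rintro _ ⟨v, rfl⟩
    rw [Matrix.mulVecLin_apply]
    exact (Submodule.span_singleton_le_iff_mem u H₀).mpr hu (hurg v)
  have quad : ∀ x ∈ H₀, star x ⬝ᵥ M.mulVec x = c * (star x ⬝ᵥ x) := by
    intro x hx
    by_cases hx0 : x = 0
    · subst hx0; simp
    obtain ⟨ρx, hxpsd, hxtr, hxrg, hxtr'⟩ := state_facts x hx0
    have hrange_x : LinearMap.range ρx.mulVecLin ≤ H₀ := by
      rintro _ ⟨v, rfl⟩
      rw [Matrix.mulVecLin_apply]
      exact (Submodule.span_singleton_le_iff_mem x H₀).mpr hx (hxrg v)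
    have heq := hind ρx ρu hxpsd hxtr hrange_x hupsd hutr hrange_u
    rw [hxtr' M, hutr' M, ← hc] at heq
    have htne : (star x ⬝ᵥ x) ≠ 0 := fun h => hx0 (dotProduct_star_self_eq_zero.mp h)
    have := congrArg (fun z => (star x ⬝ᵥ x) * z) heq
    simp only [← mul_assoc, mul_inv_cancel₀ htne, one_mul] at this
    rw [this]; ring
  exact ⟨c, sesq_of_quad M c H₀ quad⟩

private lemma dot_kron {α β : Type*} [Fintype α] [Fintype β]
    (A : Matrix α α ℂ) (B : Matrix β β ℂ) (x y : α → ℂ) (x' y' : β → ℂ) :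
    star (fun q : α × β => x q.1 * x' q.2) ⬝ᵥ
      (A ⊗ₖ B).mulVec (fun q : α × β => y q.1 * y' q.2)
    = (star x ⬝ᵥ A.mulVec y) * (star x' ⬝ᵥ B.mulVec y') := by
  have hmv : (A ⊗ₖ B).mulVec (fun q : α × β => y q.1 * y' q.2)
      = fun q : α × β => A.mulVec y q.1 * B.mulVec y' q.2 := by
    funext q
    simp only [Matrix.mulVec, dotProduct, kroneckerMap_apply, Fintype.sum_prod_type,
      Finset.mul_sum, Finset.sum_mul]
    rw [Finset.sum_comm]
    exact Finset.sum_congr rfl fun i _ => Finset.sum_congr rfl fun j _ => by ring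
  rw [hmv]
  simp only [dotProduct, Pi.star_apply, star_mul', Fintype.sum_prod_type,
    Finset.mul_sum, Finset.sum_mul]
  rw [Finset.sum_comm]
  exact Finset.sum_congr rfl fun i _ => Finset.sum_congr rfl fun j _ => by ring

private lemma trace_mul_gram (A B : Matrix n n ℂ) :
    (A * (Bᴴ * B)).trace = ∑ k, star (star (B k)) ⬝ᵥ A.mulVec (star (B k)) := by
  rw [← Matrix.mul_assoc, Matrix.trace_mul_comm, ← Matrix.mul_assoc]
  simp only [Matrix.trace, Matrix.diag_apply, Matrix.mul_apply, Matrix.conjTranspose_apply,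
    dotProduct, Matrix.mulVec, Pi.star_apply, star_star, Finset.mul_sum, Finset.sum_mul]
  refine Finset.sum_congr rfl fun j _ => ?_
  rw [Finset.sum_comm]
  exact Finset.sum_congr rfl fun k _ => Finset.sum_congr rfl fun i _ => by ring

private lemma range_gram (B : Matrix n n ℂ) :
    LinearMap.range (Bᴴ * B).mulVecLin = LinearMap.range (Bᴴ).mulVecLin := by
  have hle : LinearMap.range (Bᴴ * B).mulVecLin ≤ LinearMap.range (Bᴴ).mulVecLin := by
    rw [Matrix.mulVecLin_mul]
    exact LinearMap.range_comp_le_range _ _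
  have hrk : (Bᴴ * B).rank = Bᴴ.rank := by
    rw [Matrix.rank_conjTranspose_mul_self, Matrix.rank_conjTranspose]
  exact Submodule.eq_of_le_of_finrank_le hle (le_of_eq hrk.symm)

end Aux

/-- If H₁ is indistinguishable for the observable {M_i} on ℂ^{nA} and H₂ is
indistinguishable for the observable {N_j}, then H₁ ⊗ H₂ is indistinguishable
for the observable {M_i ⊗ N_j}. -/
theorem tensor_indistinguishable_of_indistinguishable
    (nA nB m l : ℕ)
    (M : Fin m → Matrix (Fin nA) (Fin nA) ℂ) (N : Fin l → Matrix (Fin nB) (Fin nB) ℂ)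
    (hMpos : ∀ i, (M i).PosSemidef) (hMsum : ∑ i, M i = 1)
    (hNpos : ∀ j, (N j).PosSemidef) (hNsum : ∑ j, N j = 1)
    (H₁ : Submodule ℂ (Fin nA → ℂ)) (H₂ : Submodule ℂ (Fin nB → ℂ))
    (hH₁ : MatIndistinguishable M H₁) (hH₂ : MatIndistinguishable N H₂) :
    MatIndistinguishable (fun p : Fin m × Fin l => M p.1 ⊗ₖ N p.2)
      (Submodule.span ℂ
        {v : Fin nA × Fin nB → ℂ | ∃ x ∈ H₁, ∃ y ∈ H₂, v = fun q => x q.1 * y q.2}) := by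
  intro p ρ₁ ρ₂ h1p h1t h1r h2p h2t h2r
  show ((M p.1 ⊗ₖ N p.2) * ρ₁).trace = ((M p.1 ⊗ₖ N p.2) * ρ₂).trace
  set S : Set (Fin nA × Fin nB → ℂ) :=
    {v | ∃ x ∈ H₁, ∃ y ∈ H₂, v = fun q => x q.1 * y q.2} with hS
  set W : Submodule ℂ (Fin nA × Fin nB → ℂ) := Submodule.span ℂ S with hW
  by_cases hbot : H₁ = ⊥ ∨ H₂ = ⊥
  · exfalso
    have hWbot : W = ⊥ := by
      rw [hW, Submodule.span_eq_bot]
      rintro v ⟨x, hx, y, hy, rfl⟩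
      rcases hbot with h | h
      · have hx0 : x = 0 := by rw [h] at hx; simpa using hx
        funext q; simp [hx0]
      · have hy0 : y = 0 := by rw [h] at hy; simpa using hy
        funext q; simp [hy0]
    have hρ0 : ρ₁ = 0 := by
      ext i j
      have hm : ρ₁.mulVecLin (Pi.single j 1) ∈ W := h1r ⟨Pi.single j 1, rfl⟩
      rw [hWbot, Submodule.mem_bot] at hm
      rw [Matrix.mulVecLin_apply, Matrix.mulVec_single] at hm
      have := congrFun hm i
      simpa using this
    rw [hρ0, Matrix.trace_zero] at h1t
    exact one_ne_zero h1t.symm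
  push_neg at hbot
  obtain ⟨hA, hB⟩ := hbot
  obtain ⟨c, hc⟩ := exists_scalar (M p.1) H₁ hA (hH₁ p.1)
  obtain ⟨d, hd⟩ := exists_scalar (N p.2) H₂ hB (hH₂ p.2)
  have key : ∀ v ∈ W, ∀ w ∈ W,
      star v ⬝ᵥ (M p.1 ⊗ₖ N p.2).mulVec w = (c * d) * (star v ⬝ᵥ w) := by
    intro v hv w hw
    refine Submodule.span_induction₂
      (p := fun v w _ _ => star v ⬝ᵥ (M p.1 ⊗ₖ N p.2).mulVec w = (c * d) * (star v ⬝ᵥ w))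
      ?_ ?_ ?_ ?_ ?_ ?_ ?_ hv hw
    · rintro v w ⟨x, hx, x', hx', rfl⟩ ⟨y, hy, y', hy', rfl⟩
      have h1 := dot_kron (M p.1) (N p.2) x y x' y'
      have h2 := dot_kron (1 : Matrix (Fin nA) (Fin nA) ℂ) (1 : Matrix (Fin nB) (Fin nB) ℂ)
        x y x' y'
      rw [Matrix.one_kronecker_one, Matrix.one_mulVec, Matrix.one_mulVec, Matrix.one_mulVec]
        at h2
      rw [h1, h2, hc x hx y hy, hd x' hx' y' hy']
      ring
    · intro w _; simp
    · intro v _; simp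
    · intro v₁ v₂ w _ _ _ ih1 ih2
      simp only [star_add, add_dotProduct]
      rw [ih1, ih2]; ring
    · intro v w₁ w₂ _ _ _ ih1 ih2
      simp only [Matrix.mulVec_add, dotProduct_add]
      rw [ih1, ih2]; ring
    · intro a v w _ _ ih
      simp only [star_smul, smul_dotProduct, smul_eq_mul]
      rw [ih]; ring
    · intro a v w _ _ ih
      simp only [Matrix.mulVec_smul, dotProduct_smul, smul_eq_mul]
      rw [ih]; ring
  have main : ∀ ρ : Matrix (Fin nA × Fin nB) (Fin nA × Fin nB) ℂ, ρ.PosSemidef → ρ.trace = 1 →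
      LinearMap.range ρ.mulVecLin ≤ W → ((M p.1 ⊗ₖ N p.2) * ρ).trace = c * d := by
    intro ρ hpsd htr hrg
    obtain ⟨B, rfl⟩ : ∃ B : Matrix (Fin nA × Fin nB) (Fin nA × Fin nB) ℂ, ρ = Bᴴ * B := by
        open scoped MatrixOrder in exact CStarAlgebra.nonneg_iff_eq_star_mul_self.mp hpsd.nonneg
    have hmem : ∀ k, star (B k) ∈ W := by
      intro k
      have h1 : star (B k) ∈ LinearMap.range (Bᴴ).mulVecLin := by
        refine ⟨Pi.single k 1, ?_⟩
        rw [Matrix.mulVecLin_apply, Matrix.mulVec_single]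
        funext i
        simp [Matrix.conjTranspose_apply]
      rw [← range_gram] at h1
      exact hrg h1
    rw [trace_mul_gram]
    have hterm : ∀ k, star (star (B k)) ⬝ᵥ (M p.1 ⊗ₖ N p.2).mulVec (star (B k))
        = (c * d) * (star (star (B k)) ⬝ᵥ star (B k)) :=
      fun k => key _ (hmem k) _ (hmem k)
    rw [Finset.sum_congr rfl fun k _ => hterm k, ← Finset.mul_sum]
    have htr1 : ∑ k, star (star (B k)) ⬝ᵥ star (B k) = 1 := by
      have h := trace_mul_gram (1 : Matrix (Fin nA × Fin nB) (Fin nA × Fin nB) ℂ) B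
      rw [Matrix.one_mul, htr] at h
      simp only [Matrix.one_mulVec] at h
      exact h.symm
    rw [htr1, mul_one]
  rw [main ρ₁ h1p h1t h1r, main ρ₂ h2p h2t h2r]
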